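/- Let κ be an inaccessible cardinal. Suppose B ⊆ 2^κ is comeager in a basic open set: there are s ∈ 2^{<κ} and nowhere dense sets X_i (i < κ) with [s] ∖ B ⊆ ⋃_{i<κ} X_i. Then there is a κ-Silver tree S with [S] ⊆ [s] and [S] ∩ X_i = ∅ for all i < κ; in particular [S] ⊆ B. -/

import Mathlib

open Cardinal Set

structure PreSeq2 where
  len : Ordinal
  val : Ordinal → Bool

def PreSeq2.Canonical (s : PreSeq2) : Prop := ∀ i, s.len ≤ i → s.val i = false

def IsClubIn (c : Set Ordinal) (k : Ordinal) : Prop :=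
  c ⊆ Set.Iio k ∧
  (∀ l, l < k → Order.IsSuccLimit l → (∀ a < l, ∃ b ∈ c, a ≤ b ∧ b < l) → l ∈ c) ∧
  (∀ a < k, ∃ b ∈ c, a ≤ b)

def boundedTop2 (κ : Cardinal) : TopologicalSpace (Ordinal → Bool) :=
  TopologicalSpace.generateFrom
    { U | ∃ a < κ.ord, ∃ s : Ordinal → Bool, U = { x | ∀ i < a, x i = s i } }

def Nwd2 (κ : Cardinal) (A : Set (Ordinal → Bool)) : Prop :=
  @interior _ (boundedTop2 κ) (@closure _ (boundedTop2 κ) A) = ∅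

/-- The branch set of the κ-Silver condition `f : κ → {0, 1, {0,1}}` (with `none`
playing the role of `{0,1}`). -/
def SilverSet (κ : Cardinal) (f : Ordinal → Option Bool) : Set (Ordinal → Bool) :=
  { x | ∀ i < κ.ord, ∀ b, f i = some b → x i = b }

namespace SilverAux

/-- Every point of an open set (for the bounded topology) has a basic neighborhood
inside it. -/
lemma basis_lemma {κ : Cardinal} (hord : 0 < κ.ord) {V : Set (Ordinal → Bool)}
    (hV : TopologicalSpace.GenerateOpen
      { U | ∃ a < κ.ord, ∃ s : Ordinal → Bool, U = { x | ∀ i < a, x i = s i } } V) :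
    ∀ y ∈ V, ∃ b, b < κ.ord ∧ { x : Ordinal → Bool | ∀ j < b, x j = y j } ⊆ V := by
  induction hV with
  | basic U hU =>
    obtain ⟨a, ha, p, rfl⟩ := hU
    intro y hy
    exact ⟨a, ha, fun x hx j hj => (hx j hj).trans (hy j hj)⟩
  | univ => exact fun y _ => ⟨0, hord, fun x _ => trivial⟩
  | inter U W _ _ ihU ihW =>
    intro y hy
    obtain ⟨b1, hb1, h1⟩ := ihU y hy.1
    obtain ⟨b2, hb2, h2⟩ := ihW y hy.2
    exact ⟨max b1 b2, max_lt hb1 hb2,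
      fun x hx => ⟨h1 (fun j hj => hx j (hj.trans_le (le_max_left _ _))),
        h2 (fun j hj => hx j (hj.trans_le (le_max_right _ _)))⟩⟩
  | sUnion S _ ih =>
    intro y hy
    obtain ⟨t, htS, hyt⟩ := hy
    obtain ⟨b, hb, h⟩ := ih t htS y hyt
    exact ⟨b, hb, h.trans (subset_sUnion_of_mem htS)⟩

/-- Single-step avoidance of a nowhere dense set. -/
lemma avoid {κ : Cardinal} (hκ : ℵ₀ ≤ κ) {A : Set (Ordinal → Bool)} (hA : Nwd2 κ A)
    (p : Ordinal → Bool) {a : Ordinal} (ha : a < κ.ord) :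
    ∃ b, a ≤ b ∧ b < κ.ord ∧ ∃ q : Ordinal → Bool, (∀ j < a, q j = p j) ∧
      ∀ x : Ordinal → Bool, (∀ j < b, x j = q j) → x ∉ A := by
  letI := boundedTop2 κ
  have hord : (0 : Ordinal) < κ.ord := by
    rw [← Cardinal.ord_zero, Cardinal.ord_lt_ord]
    exact lt_of_lt_of_le aleph0_pos hκ
  have hU : IsOpen { x : Ordinal → Bool | ∀ j < a, x j = p j } :=
    TopologicalSpace.isOpen_generateFrom_of_mem ⟨a, ha, p, rfl⟩
  have hnsub : ¬ ({ x : Ordinal → Bool | ∀ j < a, x j = p j } ⊆ closure A) := by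
    intro hsub
    have h2 : { x : Ordinal → Bool | ∀ j < a, x j = p j } ⊆ interior (closure A) :=
      interior_maximal hsub hU
    have h3 : interior (closure A) = (∅ : Set (Ordinal → Bool)) := hA
    rw [h3] at h2
    exact h2 (show p ∈ { x : Ordinal → Bool | ∀ j < a, x j = p j } from fun j _ => rfl)
  obtain ⟨y, hyU, hyC⟩ := not_subset.mp hnsub
  have hopen : IsOpen ((closure A)ᶜ) := isClosed_closure.isOpen_compl
  obtain ⟨b', hb', hsub⟩ := basis_lemma hord hopen y hyC
  refine ⟨max a b', le_max_left _ _, max_lt ha hb', y, fun j hj => hyU j hj, ?_⟩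
  intro x hx hxA
  have : x ∈ (closure A)ᶜ :=
    hsub (fun j hj => hx j (hj.trans_le (le_max_right _ _)))
  exact this (subset_closure hxA)

universe u

open Classical in
/-- The generic transfinite chain construction. -/
noncomputable def ch (a0 : Ordinal.{u}) (q0 : Ordinal.{u} → Bool)
    (step : Ordinal.{u} → Ordinal.{u} → (Ordinal.{u} → Bool) → Ordinal.{u} × (Ordinal.{u} → Bool)) :
    Ordinal.{u} → Ordinal.{u} × (Ordinal.{u} → Bool) := fun ρ =>
  Ordinal.limitRecOn ρ (a0, q0) (fun ν ih => step ν ih.1 ih.2)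
    (fun ν _ ih =>
      (Ordinal.bsup.{u, u} ν fun β hβ => (ih β hβ).1,
       fun j => if h : ∃ β, ∃ hβ : β < ν, j < (ih β hβ).1
         then (ih h.choose h.choose_spec.choose).2 j else q0 j))

section Chain

variable (a0 : Ordinal.{u}) (q0 : Ordinal.{u} → Bool)
  (step : Ordinal.{u} → Ordinal.{u} → (Ordinal.{u} → Bool) → Ordinal.{u} × (Ordinal.{u} → Bool))

lemma ch_zero : ch a0 q0 step 0 = (a0, q0) := by
  unfold ch
  rw [Ordinal.limitRecOn_zero]

lemma ch_succ (ν : Ordinal.{u}) :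
    ch a0 q0 step (ν + 1) = step ν (ch a0 q0 step ν).1 (ch a0 q0 step ν).2 := by
  unfold ch
  rw [Ordinal.add_one_eq_succ, Ordinal.limitRecOn_succ]

open Classical in
lemma ch_limit {ν : Ordinal.{u}} (hν : Order.IsSuccLimit ν) :
    ch a0 q0 step ν =
      (Ordinal.bsup.{u, u} ν fun β _ => (ch a0 q0 step β).1,
       fun j => if h : ∃ β, ∃ hβ : β < ν, j < (ch a0 q0 step β).1
         then (ch a0 q0 step h.choose).2 j else q0 j) := by
  unfold ch
  rw [Ordinal.limitRecOn_limit _ _ _ _ hν]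

variable {a0 q0 step}
variable (Hlt : ∀ ν b q, b < (step ν b q).1)
  (Hcoh : ∀ ν b q j, j < b → (step ν b q).2 j = q j)

include Hlt in
lemma ch_strictMono : ∀ ρ', ∀ ρ < ρ', (ch a0 q0 step ρ).1 < (ch a0 q0 step ρ').1 := by
  intro ρ'
  induction ρ' using Ordinal.induction with
  | _ ρ' IH =>
    intro ρ hρ
    rcases Ordinal.zero_or_succ_or_isSuccLimit ρ' with h0 | ⟨ν, rfl⟩ | hlim
    · subst h0; exact absurd hρ (by simp : ¬ρ < 0)
    · rw [← Ordinal.add_one_eq_succ] at *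
      have h1 : (ch a0 q0 step ν).1 < (ch a0 q0 step (ν + 1)).1 := by
        rw [ch_succ]; exact Hlt _ _ _
      have hν1 : ν < ν + 1 := by
        rw [Ordinal.add_one_eq_succ]; exact Order.lt_succ ν
      have hρν : ρ ≤ ν := by
        rw [Ordinal.add_one_eq_succ] at hρ; exact Order.lt_succ_iff.mp hρ
      rcases hρν.lt_or_eq with hlt | rfl
      · exact (IH ν hν1 ρ hlt).trans h1
      · exact h1
    · have hρ1 : ρ + 1 < ρ' := by
        rw [Ordinal.add_one_eq_succ]; exact hlim.succ_lt hρ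
      have h1 : (ch a0 q0 step ρ).1 < (ch a0 q0 step (ρ + 1)).1 := by
        rw [ch_succ]; exact Hlt _ _ _
      have h2 : (ch a0 q0 step (ρ + 1)).1 ≤ (ch a0 q0 step ρ').1 := by
        rw [ch_limit _ _ _ hlim]
        exact Ordinal.le_bsup (fun β _ => (ch a0 q0 step β).1) (ρ + 1) hρ1
      exact lt_of_lt_of_le h1 h2

include Hlt in
lemma ch_mono : ∀ ρ ρ', ρ ≤ ρ' → (ch a0 q0 step ρ).1 ≤ (ch a0 q0 step ρ').1 := by
  intro ρ ρ' h
  rcases h.lt_or_eq with h | rfl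
  · exact (ch_strictMono Hlt ρ' ρ h).le
  · exact le_rfl

include Hlt in
lemma ch_le_fst : ∀ ρ, ρ ≤ (ch a0 q0 step ρ).1 := by
  intro ρ
  induction ρ using Ordinal.induction with
  | _ ρ IH =>
    by_contra h
    push_neg at h
    exact absurd (lt_of_le_of_lt (IH _ h) (ch_strictMono Hlt ρ _ h)) (lt_irrefl _)

include Hlt Hcoh in
lemma ch_coh : ∀ ρ', ∀ ρ, ρ ≤ ρ' → ∀ j < (ch a0 q0 step ρ).1,
    (ch a0 q0 step ρ').2 j = (ch a0 q0 step ρ).2 j := by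
  intro ρ'
  induction ρ' using Ordinal.induction with
  | _ ρ' IH =>
    intro ρ hρ j hj
    rcases hρ.lt_or_eq with hlt | rfl
    · rcases Ordinal.zero_or_succ_or_isSuccLimit ρ' with h0 | ⟨ν, rfl⟩ | hlim
      · subst h0; exact absurd hlt (by simp : ¬ρ < 0)
      · rw [← Ordinal.add_one_eq_succ] at *
        have hρν : ρ ≤ ν := by
          rw [Ordinal.add_one_eq_succ] at hlt; exact Order.lt_succ_iff.mp hlt
        have hν1 : ν < ν + 1 := by
          rw [Ordinal.add_one_eq_succ]; exact Order.lt_succ ν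
        have hjν : j < (ch a0 q0 step ν).1 := lt_of_lt_of_le hj (ch_mono Hlt ρ ν hρν)
        have e1 : (ch a0 q0 step (ν + 1)).2 j = (ch a0 q0 step ν).2 j := by
          rw [ch_succ]; exact Hcoh _ _ _ j hjν
        rw [e1]
        exact IH ν hν1 ρ hρν j hj
      · have hex : ∃ β, ∃ hβ : β < ρ', j < (ch a0 q0 step β).1 := ⟨ρ, hlt, hj⟩
        have e1 : (ch a0 q0 step ρ').2 j = (ch a0 q0 step hex.choose).2 j := by
          rw [ch_limit _ _ _ hlim]
          exact dif_pos hex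
        rw [e1]
        obtain ⟨hβ, hjβ⟩ := hex.choose_spec
        rcases le_total hex.choose ρ with hc | hc
        · exact (IH ρ hlt hex.choose hc j hjβ).symm
        · exact IH hex.choose hβ ρ hc j hj
    · rfl

include Hlt in
lemma ch_lt_ord {κ : Cardinal} (hreg : κ.IsRegular) (ha0 : a0 < κ.ord)
    (Hbd : ∀ ν b q, b < κ.ord → (step ν b q).1 < κ.ord) :
    ∀ ρ < κ.ord, (ch a0 q0 step ρ).1 < κ.ord := by
  intro ρ
  induction ρ using Ordinal.induction with
  | _ ρ IH =>
    intro hρ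
    rcases Ordinal.zero_or_succ_or_isSuccLimit ρ with h0 | ⟨ν, rfl⟩ | hlim
    · subst h0; rw [ch_zero]; exact ha0
    · rw [← Ordinal.add_one_eq_succ] at *
      have hν : ν < ν + 1 := by rw [Ordinal.add_one_eq_succ]; exact Order.lt_succ ν
      rw [ch_succ]
      exact Hbd _ _ _ (IH ν hν (hν.trans hρ))
    · have heq : (ch a0 q0 step ρ).1 = Ordinal.bsup.{u, u} ρ fun β _ => (ch a0 q0 step β).1 := by
        rw [ch_limit _ _ _ hlim]
      rw [heq]
      apply Cardinal.bsup_lt_ord_of_isRegular hreg (Cardinal.lt_ord.mp hρ)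
      intro i hi
      exact IH i hi (hi.trans hρ)

end Chain

/-- Multi-task avoidance via transfinite iteration of `avoid`. -/
lemma multiAvoid {κ : Cardinal} (hin : κ.IsInaccessible) {μ a : Ordinal}
    (hμ : μ < κ.ord) (ha : a < κ.ord)
    (p : Ordinal → Ordinal → Bool) (Y : Ordinal → Set (Ordinal → Bool))
    (hY : ∀ ρ < μ, Nwd2 κ (Y ρ)) :
    ∃ b, a ≤ b ∧ b < κ.ord ∧ ∃ q : Ordinal → Bool,
      ∀ ρ < μ, ∀ x : Ordinal → Bool, (∀ j < a, x j = p ρ j) →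
        (∀ j, a ≤ j → j < b → x j = q j) → x ∉ Y ρ := by
  classical
  obtain ⟨hℵ, hreg, hsl⟩ := hin
  have hκ0 : ℵ₀ ≤ κ := hℵ.le
  have hord : Order.IsSuccLimit κ.ord := Cardinal.isSuccLimit_ord hκ0
  have key : ∀ ν b (q : Ordinal → Bool), ν < μ → b < κ.ord → a ≤ b →
      ∃ r : Ordinal × (Ordinal → Bool), b < r.1 ∧ r.1 < κ.ord ∧ (∀ j < b, r.2 j = q j) ∧
        ∀ x : Ordinal → Bool, (∀ j < a, x j = p ν j) →
          (∀ j, a ≤ j → j < r.1 → x j = r.2 j) → x ∉ Y ν := by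
    intro ν b q hν hb hab
    obtain ⟨b1, hb1, hb1κ, q1, hq1, hdisj⟩ :=
      avoid hκ0 (hY ν hν) (fun j => if j < a then p ν j else q j) hb
    have hbb : b < b + 1 := by
      rw [Ordinal.add_one_eq_succ]; exact Order.lt_succ b
    refine ⟨(max b1 (b + 1), fun j => if j < b then q j else q1 j),
      lt_of_lt_of_le hbb (le_max_right _ _),
      max_lt hb1κ (by rw [Ordinal.add_one_eq_succ]; exact hord.succ_lt hb), ?_, ?_⟩
    · intro j hj; exact if_pos hj
    · intro x hxa hxb hxY
      have hxb' : ∀ j, a ≤ j → j < max b1 (b + 1) →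
          x j = if j < b then q j else q1 j := hxb
      refine hdisj x ?_ hxY
      intro j hj
      rcases lt_or_ge j a with hja | hja
      · rw [hxa j hja, hq1 j (lt_of_lt_of_le hja hab), if_pos hja]
      · rcases lt_or_ge j b with hjb | hjb
        · rw [hxb' j hja (lt_of_lt_of_le hjb (le_of_lt (lt_of_lt_of_le hbb (le_max_right _ _)))),
            if_pos hjb, hq1 j hjb, if_neg (not_lt.2 hja)]
        · rw [hxb' j hja (lt_of_lt_of_le hj (le_max_left _ _)), if_neg (not_lt.2 hjb)]
  set stepI : Ordinal → Ordinal → (Ordinal → Bool) → Ordinal × (Ordinal → Bool) :=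
    fun ν b q => if h : ν < μ ∧ b < κ.ord ∧ a ≤ b then (key ν b q h.1 h.2.1 h.2.2).choose
      else (b + 1, q) with hstepI
  have stepI_pos : ∀ ν b q (h : ν < μ ∧ b < κ.ord ∧ a ≤ b),
      stepI ν b q = (key ν b q h.1 h.2.1 h.2.2).choose := by
    intro ν b q h
    rw [hstepI]
    exact dif_pos h
  have stepI_neg : ∀ ν b q, ¬(ν < μ ∧ b < κ.ord ∧ a ≤ b) → stepI ν b q = (b + 1, q) := by
    intro ν b q h
    rw [hstepI]
    exact dif_neg h
  have Hlt : ∀ ν b q, b < (stepI ν b q).1 := by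
    intro ν b q
    by_cases h : ν < μ ∧ b < κ.ord ∧ a ≤ b
    · rw [stepI_pos ν b q h]
      exact (key ν b q h.1 h.2.1 h.2.2).choose_spec.1
    · rw [stepI_neg ν b q h, Ordinal.add_one_eq_succ]
      exact Order.lt_succ b
  have Hcoh : ∀ ν b q j, j < b → (stepI ν b q).2 j = q j := by
    intro ν b q j hj
    by_cases h : ν < μ ∧ b < κ.ord ∧ a ≤ b
    · rw [stepI_pos ν b q h]
      exact (key ν b q h.1 h.2.1 h.2.2).choose_spec.2.2.1 j hj
    · rw [stepI_neg ν b q h]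
  have Hbd : ∀ ν b q, b < κ.ord → (stepI ν b q).1 < κ.ord := by
    intro ν b q hb
    by_cases h : ν < μ ∧ b < κ.ord ∧ a ≤ b
    · rw [stepI_pos ν b q h]
      exact (key ν b q h.1 h.2.1 h.2.2).choose_spec.2.1
    · rw [stepI_neg ν b q h, Ordinal.add_one_eq_succ]
      exact hord.succ_lt hb
  have hC0 : (ch a (fun _ => false) stepI 0).1 = a := by rw [ch_zero]
  have hCmono := ch_mono (a0 := a) (q0 := fun _ => false) Hlt
  have hCle : ∀ ρ, a ≤ (ch a (fun _ => false) stepI ρ).1 := by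
    intro ρ
    have h := hCmono 0 ρ zero_le
    rwa [hC0] at h
  have hClt := ch_lt_ord (a0 := a) (q0 := fun _ => false) Hlt (⟨hℵ, hreg, hsl⟩ : κ.IsInaccessible).isRegular ha Hbd
  refine ⟨(ch a (fun _ => false) stepI μ).1, hCle μ, hClt μ hμ,
    (ch a (fun _ => false) stepI μ).2, ?_⟩
  intro ρ hρ x hxa hxb
  have hρκ : ρ < κ.ord := hρ.trans hμ
  have hρ1 : ρ + 1 ≤ μ := by
    rw [Ordinal.add_one_eq_succ]; exact Order.succ_le_of_lt hρ
  have hcond : ρ < μ ∧ (ch a (fun _ => false) stepI ρ).1 < κ.ord ∧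
      a ≤ (ch a (fun _ => false) stepI ρ).1 := ⟨hρ, hClt ρ hρκ, hCle ρ⟩
  have hsucc : ch a (fun _ => false) stepI (ρ + 1) =
      (key ρ (ch a (fun _ => false) stepI ρ).1 (ch a (fun _ => false) stepI ρ).2
        hcond.1 hcond.2.1 hcond.2.2).choose := by
    rw [ch_succ, stepI_pos _ _ _ hcond]
  have spec := (key ρ (ch a (fun _ => false) stepI ρ).1 (ch a (fun _ => false) stepI ρ).2
    hcond.1 hcond.2.1 hcond.2.2).choose_spec
  rw [← hsucc] at spec
  refine spec.2.2.2 x hxa ?_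
  intro j hja hj
  have hj' : j < (ch a (fun _ => false) stepI μ).1 := lt_of_lt_of_le hj (hCmono (ρ + 1) μ hρ1)
  rw [hxb j hja hj']
  exact ch_coh Hlt Hcoh μ (ρ + 1) hρ1 j hj

/-- Enumeration of all binary patterns below `a` by the ordinals below some `μ`
with `μ.card = 2 ^ a.card`. -/
lemma enumPatterns (a : Ordinal) : ∃ (μ : Ordinal) (p : Ordinal → Ordinal → Bool),
    μ.card = 2 ^ a.card ∧ ∀ x : Ordinal → Bool, ∃ ρ < μ, ∀ j < a, p ρ j = x j := by
  classical
  set μ := ((2 : Cardinal) ^ a.card).ord with hμ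
  have hcard : #(μ.ToType) = #(a.ToType → Bool) := by
    simp [hμ, Cardinal.mk_arrow]
  obtain ⟨E⟩ := Cardinal.eq.mp hcard
  refine ⟨μ, fun ρ j => if h : ρ < μ ∧ j < a
      then E ((Ordinal.ToType.mk (o := μ)) ⟨ρ, h.1⟩) ((Ordinal.ToType.mk (o := a)) ⟨j, h.2⟩)
      else false, Cardinal.card_ord _, ?_⟩
  intro x
  set t : a.ToType → Bool := fun u => x ((Ordinal.ToType.mk (o := a)).symm u).1 with ht
  refine ⟨((Ordinal.ToType.mk (o := μ)).symm (E.symm t)).1,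
    ((Ordinal.ToType.mk (o := μ)).symm (E.symm t)).2, ?_⟩
  intro j hj
  dsimp only
  rw [dif_pos ⟨((Ordinal.ToType.mk (o := μ)).symm (E.symm t)).2, hj⟩]
  have h1 : (⟨((Ordinal.ToType.mk (o := μ)).symm (E.symm t)).1,
      ((Ordinal.ToType.mk (o := μ)).symm (E.symm t)).2⟩ : Set.Iio μ) =
      (Ordinal.ToType.mk (o := μ)).symm (E.symm t) := Subtype.eta _ _
  rw [h1, OrderIso.apply_symm_apply, Equiv.apply_symm_apply]
  show x ((Ordinal.ToType.mk (o := a)).symm ((Ordinal.ToType.mk (o := a)) ⟨j, hj⟩)).1 = x j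
  rw [OrderIso.symm_apply_apply]

end SilverAux

open SilverAux in
/-- For inaccessible `κ`, a set comeager in a basic open subset of `2^κ` contains
the branch set of a κ-Silver condition. -/
theorem comeager_contains_silver (κ : Cardinal) (hin : κ.IsInaccessible)
    (B : Set (Ordinal → Bool)) (s : PreSeq2) (hlen : s.len < κ.ord)
    (hcan : s.Canonical) (X : Ordinal → Set (Ordinal → Bool))
    (hX : ∀ i < κ.ord, Nwd2 κ (X i))
    (hcover : { x | ∀ i < s.len, x i = s.val i } \ B ⊆ ⋃ i ∈ Set.Iio κ.ord, X i) :
    ∃ f : Ordinal → Option Bool,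
      (∃ c, IsClubIn c κ.ord ∧ ∀ i ∈ c, f i = none) ∧
      SilverSet κ f ⊆ { x | ∀ i < s.len, x i = s.val i } ∧
      (∀ i < κ.ord, SilverSet κ f ∩ X i = ∅) ∧
      SilverSet κ f ⊆ B := by
  classical
  obtain ⟨hℵ, hreg, hsl⟩ := hin
  have hin' : κ.IsInaccessible := ⟨hℵ, hreg, hsl⟩
  have hκ0 : ℵ₀ ≤ κ := hℵ.le
  have hord : Order.IsSuccLimit κ.ord := Cardinal.isSuccLimit_ord hκ0
  -- the key one-stage extension
  have okey : ∀ α δ (q : Ordinal → Bool), α < κ.ord → δ < κ.ord →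
      ∃ r : Ordinal × (Ordinal → Bool), δ < r.1 ∧ r.1 < κ.ord ∧ (∀ j < δ, r.2 j = q j) ∧
        ∀ x : Ordinal → Bool, (∀ j, δ + 1 ≤ j → j < r.1 → x j = r.2 j) → x ∉ X α := by
    intro α δ q hα hδ
    obtain ⟨μ, p, hμcard, hsurj⟩ := enumPatterns (δ + 1)
    have hδ1 : δ + 1 < κ.ord := by
      rw [Ordinal.add_one_eq_succ]; exact hord.succ_lt hδ
    have hμ : μ < κ.ord := by
      rw [Cardinal.lt_ord, hμcard]
      exact hsl (Cardinal.lt_ord.mp hδ1)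
    obtain ⟨b, hab, hbκ, q', hq'⟩ :=
      multiAvoid hin' hμ hδ1 p (fun _ => X α) (fun ρ _ => hX α hα)
    have hδb : δ < b := lt_of_lt_of_le
      (by rw [Ordinal.add_one_eq_succ]; exact Order.lt_succ δ) hab
    refine ⟨(b, fun j => if j < δ + 1 then q j else q' j), hδb, hbκ, ?_, ?_⟩
    · intro j hj
      exact if_pos (hj.trans (by rw [Ordinal.add_one_eq_succ]; exact Order.lt_succ δ))
    · intro x hx hxX
      have hx' : ∀ j, δ + 1 ≤ j → j < b → x j = if j < δ + 1 then q j else q' j := hx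
      obtain ⟨ρ, hρ, hp⟩ := hsurj x
      refine hq' ρ hρ x (fun j hj => (hp j hj).symm) ?_ hxX
      intro j hj1 hj2
      rw [hx' j hj1 hj2, if_neg (not_lt.2 hj1)]
  set stepO : Ordinal → Ordinal → (Ordinal → Bool) → Ordinal × (Ordinal → Bool) :=
    fun α δ q => if h : α < κ.ord ∧ δ < κ.ord then (okey α δ q h.1 h.2).choose
      else (δ + 1, q) with hstepO
  have stepO_pos : ∀ α δ q (h : α < κ.ord ∧ δ < κ.ord),
      stepO α δ q = (okey α δ q h.1 h.2).choose := by
    intro α δ q h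
    rw [hstepO]
    exact dif_pos h
  have stepO_neg : ∀ α δ q, ¬(α < κ.ord ∧ δ < κ.ord) → stepO α δ q = (δ + 1, q) := by
    intro α δ q h
    rw [hstepO]
    exact dif_neg h
  have Hlt : ∀ α δ q, δ < (stepO α δ q).1 := by
    intro α δ q
    by_cases h : α < κ.ord ∧ δ < κ.ord
    · rw [stepO_pos α δ q h]
      exact (okey α δ q h.1 h.2).choose_spec.1
    · rw [stepO_neg α δ q h, Ordinal.add_one_eq_succ]
      exact Order.lt_succ δ
  have Hcoh : ∀ α δ q j, j < δ → (stepO α δ q).2 j = q j := by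
    intro α δ q j hj
    by_cases h : α < κ.ord ∧ δ < κ.ord
    · rw [stepO_pos α δ q h]
      exact (okey α δ q h.1 h.2).choose_spec.2.2.1 j hj
    · rw [stepO_neg α δ q h]
  have Hbd : ∀ α δ q, δ < κ.ord → (stepO α δ q).1 < κ.ord := by
    intro α δ q hδ
    by_cases h : α < κ.ord ∧ δ < κ.ord
    · rw [stepO_pos α δ q h]
      exact (okey α δ q h.1 h.2).choose_spec.2.1
    · rw [stepO_neg α δ q h, Ordinal.add_one_eq_succ]
      exact hord.succ_lt hδ
  set D := ch s.len s.val stepO with hD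
  have hD0 : D 0 = (s.len, s.val) := ch_zero _ _ _
  have Dmono : ∀ ρ ρ', ρ ≤ ρ' → (D ρ).1 ≤ (D ρ').1 := ch_mono Hlt
  have Dstrict : ∀ ρ' ρ, ρ < ρ' → (D ρ).1 < (D ρ').1 := ch_strictMono Hlt
  have Dle : ∀ ρ, ρ ≤ (D ρ).1 := ch_le_fst Hlt
  have Dcoh : ∀ ρ' ρ, ρ ≤ ρ' → ∀ j < (D ρ).1, (D ρ').2 j = (D ρ).2 j := ch_coh Hlt Hcoh
  have Dlt : ∀ ρ < κ.ord, (D ρ).1 < κ.ord := ch_lt_ord Hlt hin'.isRegular hlen Hbd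
  have Dlen : ∀ ρ, s.len ≤ (D ρ).1 := by
    intro ρ
    have := Dmono 0 ρ zero_le
    rwa [hD0] at this
  -- the Silver condition
  set fdef : Ordinal → Option Bool :=
    fun j => if h : ∃ α, α < κ.ord ∧ (D α).1 = j then none
      else some ((D (j + 1)).2 j) with hfdef
  have hstem : SilverSet κ fdef ⊆ { x | ∀ i < s.len, x i = s.val i } := by
    intro x hx j hj
    have hjκ : j < κ.ord := hj.trans hlen
    have hnm : ¬ ∃ α, α < κ.ord ∧ (D α).1 = j := by
      rintro ⟨α, hα, hα2⟩
      have : s.len ≤ (D α).1 := Dlen α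
      rw [hα2] at this
      exact absurd hj (not_lt.2 this)
    have hfj := hx j hjκ ((D (j + 1)).2 j) (dif_neg hnm)
    have hjD0 : j < (D 0).1 := by rw [hD0]; exact hj
    have hcoh := Dcoh (j + 1) 0 zero_le j hjD0
    rw [hD0] at hcoh
    rw [hfj, hcoh]
  have hdisj : ∀ i < κ.ord, SilverSet κ fdef ∩ X i = ∅ := by
    intro i hi
    rw [Set.eq_empty_iff_forall_notMem]
    rintro x ⟨hxS, hxX⟩
    have hδ : (D i).1 < κ.ord := Dlt i hi
    have hi1 : i + 1 < κ.ord := by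
      rw [Ordinal.add_one_eq_succ]; exact hord.succ_lt hi
    have hcond : i < κ.ord ∧ (D i).1 < κ.ord := ⟨hi, hδ⟩
    have hsucc : D (i + 1) = stepO i (D i).1 (D i).2 := ch_succ _ _ _ _
    rw [stepO_pos _ _ _ hcond] at hsucc
    have spec := (okey i (D i).1 (D i).2 hcond.1 hcond.2).choose_spec
    rw [← hsucc] at spec
    refine spec.2.2.2 x ?_ hxX
    intro j hj1 hj2
    have hjκ : j < κ.ord := hj2.trans (Dlt (i + 1) hi1)
    have hnm : ¬ ∃ α, α < κ.ord ∧ (D α).1 = j := by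
      rintro ⟨α, hα, hα2⟩
      rcases le_or_gt α i with hc | hc
      · have hle : (D α).1 ≤ (D i).1 := Dmono α i hc
        rw [hα2] at hle
        have h3 : j < (D i).1 + 1 := by
          rw [Ordinal.add_one_eq_succ]
          exact Order.lt_succ_of_le hle
        exact absurd hj1 (not_le.2 h3)
      · have hc1 : i + 1 ≤ α := by
          rw [Ordinal.add_one_eq_succ]; exact Order.succ_le_of_lt hc
        have hle : (D (i + 1)).1 ≤ (D α).1 := Dmono _ _ hc1
        rw [hα2] at hle
        exact absurd hj2 (not_lt.2 hle)
    have hfj := hxS j hjκ ((D (j + 1)).2 j) (dif_neg hnm)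
    rw [hfj]
    have hjj : j < (D (j + 1)).1 := lt_of_lt_of_le
      (by rw [Ordinal.add_one_eq_succ]; exact Order.lt_succ j) (Dle (j + 1))
    rcases le_total (j + 1) (i + 1) with hc | hc
    · exact (Dcoh (i + 1) (j + 1) hc j hjj).symm
    · exact Dcoh (j + 1) (i + 1) hc j hj2
  have hB : SilverSet κ fdef ⊆ B := by
    intro x hx
    by_contra hxB
    have hxU := hcover ⟨hstem hx, hxB⟩
    simp only [Set.mem_iUnion, Set.mem_Iio] at hxU
    obtain ⟨i, hi, hxi⟩ := hxU
    have hmem : x ∈ SilverSet κ fdef ∩ X i := ⟨hx, hxi⟩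
    rw [hdisj i hi] at hmem
    exact hmem
  refine ⟨fdef, ⟨{ j | ∃ α, α < κ.ord ∧ (D α).1 = j }, ⟨?_, ?_, ?_⟩, ?_⟩, hstem, hdisj, hB⟩
  · rintro j ⟨α, hα, rfl⟩
    exact Dlt α hα
  · intro l hl hlim H
    have h0 : s.len < l := by
      obtain ⟨b0, ⟨γ, hγ, rfl⟩, _, hbl⟩ := H 0 hlim.pos
      exact lt_of_le_of_lt (Dlen γ) hbl
    have hSne : ({α | l ≤ (D α).1} : Set Ordinal).Nonempty := ⟨l, Dle l⟩
    set lam := sInf {α | l ≤ (D α).1} with hlam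
    have hlamS : l ≤ (D lam).1 := csInf_mem hSne
    have hltl : ∀ β < lam, (D β).1 < l := by
      intro β hβ
      by_contra hc
      push_neg at hc
      exact absurd hβ (not_lt.2 (csInf_le' hc))
    have hlamκ : lam < κ.ord := lt_of_le_of_lt (csInf_le' (Dle l)) hl
    rcases Ordinal.zero_or_succ_or_isSuccLimit lam with hz | ⟨ν, hν⟩ | hlim'
    · rw [hz] at hlamS
      have hD00 : (D 0).1 = s.len := by rw [hD0]
      rw [hD00] at hlamS
      exact absurd h0 (not_lt.2 hlamS)
    · rw [← Ordinal.add_one_eq_succ] at hν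
      have hνlam : ν < lam := by
        rw [← hν, Ordinal.add_one_eq_succ]; exact Order.lt_succ ν
      have hνl : (D ν).1 < l := hltl ν hνlam
      rcases hlamS.lt_or_eq with hlt2 | heq
      · exfalso
        have hstep : (D ν).1 + 1 < l := by
          rw [Ordinal.add_one_eq_succ]; exact hlim.succ_lt hνl
        obtain ⟨b0, ⟨γ, hγ, rfl⟩, hb1, hb2⟩ := H ((D ν).1 + 1) hstep
        have hνγ : ν < γ := by
          by_contra hc
          push_neg at hc
          have hle : (D γ).1 ≤ (D ν).1 := Dmono γ ν hc
          have h2 : (D ν).1 + 1 ≤ (D ν).1 := le_trans hb1 hle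
          rw [Ordinal.add_one_eq_succ] at h2
          exact absurd h2 (not_le.2 (Order.lt_succ _))
        have hle2 : (D lam).1 ≤ (D γ).1 := by
          apply Dmono
          rw [← hν, Ordinal.add_one_eq_succ]
          exact Order.succ_le_of_lt hνγ
        exact absurd (lt_of_lt_of_le hlt2 hle2) (not_lt.2 hb2.le)
      · exact ⟨lam, hlamκ, heq.symm⟩
    · have hbsup : (D lam).1 = Ordinal.bsup lam fun β _ => (D β).1 := by
        rw [hD, ch_limit _ _ _ hlim']
      have hle : (D lam).1 ≤ l := by
        rw [hbsup]
        exact Ordinal.bsup_le fun β hβ => (hltl β hβ).le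
      exact ⟨lam, hlamκ, le_antisymm hle hlamS⟩
  · intro a ha
    exact ⟨(D a).1, ⟨a, ha, rfl⟩, Dle a⟩
  · intro i hi
    exact dif_pos hi
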